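/- Counterexample to the three-variable von Neumann inequality with nilpotent shifts: Let e₁,…,e₈ be the standard basis of ℂ⁸ and define commuting contractions A₁, A₂, A₃ on ℂ⁸ by A₁: e₁↦e₂↦−e₅↦−e₈↦0, e₃↦e₇↦0, e₄↦e₆↦0; A₂: e₁↦e₃↦−e₆↦−e₈↦0, e₂↦e₇↦0, e₄↦e₅↦0; A₃: e₁↦e₄↦−e₇↦−e₈↦0, e₂↦e₆↦0, e₃↦e₅↦0 (all other basis vectors map to 0). Then A₁,A₂,A₃ pairwise commute, each ‖Aᵢ‖ ≤ 1, and for p(z₁,z₂,z₃) = z₁z₂z₃ − z₁³ − z₂³ − z₃³ one has ‖p(A₁,A₂,A₃)‖ ≥ 4 > sup_{|z₁|=|z₂|=|z₃|=1} |p(z₁,z₂,z₃)|. -/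

import Mathlib

open Matrix
open scoped Matrix.Norms.L2Operator

/-- The nilpotent shift `A₁` of the Crabb–Davie example: `e₁↦e₂↦−e₅↦−e₈↦0`,
`e₃↦e₇↦0`, `e₄↦e₆↦0` (0-indexed entries: column `j` is the image of `e_{j+1}`). -/
noncomputable def CD₁ : Matrix (Fin 8) (Fin 8) ℂ :=
  single 1 0 1 - single 4 1 1 + single 7 4 1 +
    single 6 2 1 + single 5 3 1

/-- `A₂`: `e₁↦e₃↦−e₆↦−e₈↦0`, `e₂↦e₇↦0`, `e₄↦e₅↦0`. -/
noncomputable def CD₂ : Matrix (Fin 8) (Fin 8) ℂ :=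
  single 2 0 1 - single 5 2 1 + single 7 5 1 +
    single 6 1 1 + single 4 3 1

/-- `A₃`: `e₁↦e₄↦−e₇↦−e₈↦0`, `e₂↦e₆↦0`, `e₃↦e₅↦0`. -/
noncomputable def CD₃ : Matrix (Fin 8) (Fin 8) ℂ :=
  single 3 0 1 - single 6 3 1 + single 7 6 1 +
    single 5 1 1 + single 4 2 1

lemma CD_stdct (i j : Fin 8) : (single i j (1:ℂ))ᴴ = single j i 1 := by
  ext a b
  simp only [conjTranspose_apply, Matrix.single, Matrix.of_apply]
  split_ifs with h1 h2 h2 <;> simp_all [and_comm]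

/-- Any matrix with `(AᴴA)² = AᴴA` is a contraction in the `L²` operator norm. -/
lemma CD_contraction (A : Matrix (Fin 8) (Fin 8) ℂ)
    (h : (Aᴴ * A) * (Aᴴ * A) = Aᴴ * A) : ‖A‖ ≤ 1 := by
  have h1 := Matrix.l2_opNorm_conjTranspose_mul_self A
  have h2 := Matrix.l2_opNorm_conjTranspose_mul_self (Aᴴ * A)
  rw [conjTranspose_mul, conjTranspose_conjTranspose, h] at h2
  have h0 : (0:ℝ) ≤ ‖A‖ := norm_nonneg A
  by_contra hc
  push_neg at hc
  have ha2 : 1 < ‖A‖ * ‖A‖ := by nlinarith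
  nlinarith [h1, h2, ha2]

set_option maxHeartbeats 2000000 in
/-- The Crabb–Davie counterexample to the three-variable von Neumann inequality:
`A₁, A₂, A₃` are commuting contractions on `ℂ⁸` and for
`p(z₁,z₂,z₃) = z₁z₂z₃ − z₁³ − z₂³ − z₃³` one has
`‖p(A₁,A₂,A₃)‖ ≥ 4 > sup_{𝕋³} |p|`. -/
theorem crabb_davie_counterexample :
    (CD₁ * CD₂ = CD₂ * CD₁ ∧ CD₁ * CD₃ = CD₃ * CD₁ ∧ CD₂ * CD₃ = CD₃ * CD₂) ∧
    (‖CD₁‖ ≤ 1 ∧ ‖CD₂‖ ≤ 1 ∧ ‖CD₃‖ ≤ 1) ∧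
    (4 : ℝ) ≤ ‖CD₁ * CD₂ * CD₃ - CD₁ ^ 3 - CD₂ ^ 3 - CD₃ ^ 3‖ ∧
    (∀ z₁ z₂ z₃ : ℂ, ‖z₁‖ = 1 → ‖z₂‖ = 1 → ‖z₃‖ = 1 →
      ‖z₁ * z₂ * z₃ - z₁ ^ 3 - z₂ ^ 3 - z₃ ^ 3‖ < 4) := by
  refine ⟨⟨?_, ?_, ?_⟩, ⟨?_, ?_, ?_⟩, ?_, ?_⟩
  · simp (config := { decide := true }) only [CD₁, CD₂, sub_eq_add_neg, add_mul, mul_add,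
      neg_mul, mul_neg, neg_neg, neg_zero, add_zero, zero_add, zero_mul, mul_zero, neg_add,
      Matrix.single_mul_single_same, Matrix.single_mul_single_of_ne, one_mul, ne_eq, not_false_eq_true]
  · simp (config := { decide := true }) only [CD₁, CD₃, sub_eq_add_neg, add_mul, mul_add,
      neg_mul, mul_neg, neg_neg, neg_zero, add_zero, zero_add, zero_mul, mul_zero, neg_add,
      Matrix.single_mul_single_same, Matrix.single_mul_single_of_ne, one_mul, ne_eq, not_false_eq_true]
  · simp (config := { decide := true }) only [CD₂, CD₃, sub_eq_add_neg, add_mul, mul_add,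
      neg_mul, mul_neg, neg_neg, neg_zero, add_zero, zero_add, zero_mul, mul_zero, neg_add,
      Matrix.single_mul_single_same, Matrix.single_mul_single_of_ne, one_mul, ne_eq, not_false_eq_true]
  · refine CD_contraction _ ?_
    simp (config := { decide := true }) only [CD₁, sub_eq_add_neg, conjTranspose_add,
      conjTranspose_neg, CD_stdct, add_mul, mul_add, neg_mul, mul_neg, neg_neg, neg_zero,
      add_zero, zero_add, zero_mul, mul_zero, neg_add,
      Matrix.single_mul_single_same, Matrix.single_mul_single_of_ne, one_mul, ne_eq, not_false_eq_true]
  · refine CD_contraction _ ?_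
    simp (config := { decide := true }) only [CD₂, sub_eq_add_neg, conjTranspose_add,
      conjTranspose_neg, CD_stdct, add_mul, mul_add, neg_mul, mul_neg, neg_neg, neg_zero,
      add_zero, zero_add, zero_mul, mul_zero, neg_add,
      Matrix.single_mul_single_same, Matrix.single_mul_single_of_ne, one_mul, ne_eq, not_false_eq_true]
  · refine CD_contraction _ ?_
    simp (config := { decide := true }) only [CD₃, sub_eq_add_neg, conjTranspose_add,
      conjTranspose_neg, CD_stdct, add_mul, mul_add, neg_mul, mul_neg, neg_neg, neg_zero,
      add_zero, zero_add, zero_mul, mul_zero, neg_add,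
      Matrix.single_mul_single_same, Matrix.single_mul_single_of_ne, one_mul, ne_eq, not_false_eq_true]
  · -- lower bound 4
    have hP : CD₁ * CD₂ * CD₃ - CD₁ ^ 3 - CD₂ ^ 3 - CD₃ ^ 3 = single 7 0 (4:ℂ) := by
      simp (config := { decide := true }) only [CD₁, CD₂, CD₃, pow_succ, pow_zero, one_mul,
        sub_eq_add_neg, add_mul, mul_add, neg_mul, mul_neg, neg_neg, neg_zero,
        add_zero, zero_add, zero_mul, mul_zero, neg_add,
        Matrix.single_mul_single_same, Matrix.single_mul_single_of_ne, one_mul, ne_eq, not_false_eq_true]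
      rw [show ((4:ℂ)) = 1 + 1 + 1 + 1 by norm_num, Matrix.single_add,
        Matrix.single_add, Matrix.single_add]
    have key := Matrix.l2_opNorm_mulVec (CD₁ * CD₂ * CD₃ - CD₁ ^ 3 - CD₂ ^ 3 - CD₃ ^ 3)
      (EuclideanSpace.single (0 : Fin 8) (1:ℂ))
    rw [EuclideanSpace.norm_single, norm_one, mul_one] at key
    refine le_trans (le_of_eq ?_) key
    rw [EuclideanSpace.norm_eq]
    rw [Fin.sum_univ_eight]
    simp (config := { decide := true }) [hP, mulVec, dotProduct,
      Fin.sum_univ_eight, EuclideanSpace.single_apply, Matrix.single, Matrix.of_apply,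
      if_true, if_false, mul_one, mul_zero, zero_mul, add_zero, zero_add,
      EuclideanSpace.equiv]
  · -- scalar bound on the torus
    intro z₁ z₂ z₃ h1 h2 h3
    by_contra hlt
    push_neg at hlt
    set w := z₁ * z₂ * z₃ with hw
    set a := z₁ ^ 3 with ha
    set b := z₂ ^ 3 with hb
    set c := z₃ ^ 3 with hc
    have hwn : Complex.normSq w = 1 := by
      rw [← Complex.sq_norm, hw]; simp [_root_.map_mul, h1, h2, h3]
    have han : Complex.normSq a = 1 := by
      rw [← Complex.sq_norm, ha]; simp [map_pow, h1]
    have hbn : Complex.normSq b = 1 := by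
      rw [← Complex.sq_norm, hb]; simp [map_pow, h2]
    have hcn : Complex.normSq c = 1 := by
      rw [← Complex.sq_norm, hc]; simp [map_pow, h3]
    have h16 : (16:ℝ) ≤ Complex.normSq (w - a - b - c) := by
      rw [← Complex.sq_norm]
      nlinarith [hlt, norm_nonneg (w - a - b - c)]
    rw [Complex.normSq_apply] at hwn han hbn hcn h16
    simp only [Complex.sub_re, Complex.sub_im] at h16
    have pab : a.re * b.re + a.im * b.im ≤ 1 := by
      nlinarith [sq_nonneg (a.re * b.im - a.im * b.re), sq_nonneg (a.re*b.re + a.im*b.im - 1)]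
    have pac : a.re * c.re + a.im * c.im ≤ 1 := by
      nlinarith [sq_nonneg (a.re * c.im - a.im * c.re), sq_nonneg (a.re*c.re + a.im*c.im - 1)]
    have pbc : b.re * c.re + b.im * c.im ≤ 1 := by
      nlinarith [sq_nonneg (b.re * c.im - b.im * c.re), sq_nonneg (b.re*c.re + b.im*c.im - 1)]
    have pwa : -1 ≤ w.re * a.re + w.im * a.im := by
      nlinarith [sq_nonneg (w.re * a.im - w.im * a.re), sq_nonneg (w.re*a.re + w.im*a.im + 1)]
    have pwb : -1 ≤ w.re * b.re + w.im * b.im := by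
      nlinarith [sq_nonneg (w.re * b.im - w.im * b.re), sq_nonneg (w.re*b.re + w.im*b.im + 1)]
    have pwc : -1 ≤ w.re * c.re + w.im * c.im := by
      nlinarith [sq_nonneg (w.re * c.im - w.im * c.re), sq_nonneg (w.re*c.re + w.im*c.im + 1)]
    have ewa : w.re * a.re + w.im * a.im = -1 := by nlinarith
    have ewb : w.re * b.re + w.im * b.im = -1 := by nlinarith
    have ewc : w.re * c.re + w.im * c.im = -1 := by nlinarith
    have haw : a = -w := by
      apply Complex.ext <;> simp only [Complex.neg_re, Complex.neg_im] <;>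
        nlinarith [sq_nonneg (a.re + w.re), sq_nonneg (a.im + w.im)]
    have hbw : b = -w := by
      apply Complex.ext <;> simp only [Complex.neg_re, Complex.neg_im] <;>
        nlinarith [sq_nonneg (b.re + w.re), sq_nonneg (b.im + w.im)]
    have hcw : c = -w := by
      apply Complex.ext <;> simp only [Complex.neg_re, Complex.neg_im] <;>
        nlinarith [sq_nonneg (c.re + w.re), sq_nonneg (c.im + w.im)]
    have habc : a * b * c = w ^ 3 := by rw [ha, hb, hc, hw]; ring
    rw [haw, hbw, hcw] at habc
    have hw3 : w ^ 3 = 0 := by linear_combination (-1/2 : ℂ) * habc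
    have hw0 : w = 0 := pow_eq_zero_iff (by norm_num) |>.mp hw3
    rw [hw0] at hwn
    simp at hwn
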